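/- Let μ be a Borel measure on ℝ^d (d ≥ 1, Euclidean metric) with 0 < μ(B) < ∞ for every open ball B, and assume there exists y₀ ∈ ℝ^d with limsup_{r→∞} μ(B_{r+1}(y₀))/μ(B_r(y₀)) < ∞. Then the centered Hardy–Littlewood maximal operator M^c possesses the dichotomy property: for every f ∈ L¹_loc(μ), if M^c f(x₀) < ∞ for some x₀ ∈ ℝ^d, then M^c f(x) < ∞ for μ-almost every x ∈ ℝ^d. -/

import Mathlib

open MeasureTheory Metric Filter Set ENNReal Topology

/-- The centered Hardy–Littlewood maximal function of `f` at `x`,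
with respect to the measure `μ`. -/
noncomputable def centeredMaximal {X : Type*} [MeasurableSpace X] [PseudoMetricSpace X]
    (μ : Measure X) (f : X → ℝ) (x : X) : ℝ≥0∞ :=
  ⨆ (r : ℝ) (_ : 0 < r),
    (∫⁻ y in Metric.ball x r, ENNReal.ofReal |f y| ∂μ) / μ (Metric.ball x r)

/-- The non-centered Hardy–Littlewood maximal function of `f` at `x`:
the supremum is taken over all open balls containing `x`. -/
noncomputable def noncenteredMaximal {X : Type*} [MeasurableSpace X] [PseudoMetricSpace X]
    (μ : Measure X) (f : X → ℝ) (x : X) : ℝ≥0∞ :=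
  ⨆ (c : X) (r : ℝ) (_ : 0 < r) (_ : x ∈ Metric.ball c r),
    (∫⁻ y in Metric.ball c r, ENNReal.ofReal |f y| ∂μ) / μ (Metric.ball c r)

/-- `f ∈ L¹_loc(μ)`: `∫_B |f| dμ < ∞` for every open ball `B`. -/
def LocallyIntegrableBall {X : Type*} [MeasurableSpace X] [PseudoMetricSpace X]
    (μ : Measure X) (f : X → ℝ) : Prop :=
  ∀ (c : X) (r : ℝ), 0 < r → (∫⁻ y in Metric.ball c r, ENNReal.ofReal |f y| ∂μ) < ⊤

/-- For a Borel measure on `ℝ^d` giving positive finite measure to every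
open ball, if `limsup_{r→∞} μ(B_{r+1}(y₀))/μ(B_r(y₀)) < ∞` for some `y₀`, then the centered
maximal operator possesses the dichotomy property: if `M^c f(x₀) < ∞` for some `x₀`, then
`M^c f < ∞` μ-a.e. -/
theorem dichotomy_centered_of_condC (d : ℕ) (hd : 1 ≤ d)
    (μ : Measure (EuclideanSpace ℝ (Fin d)))
    (hμ : ∀ (c : EuclideanSpace ℝ (Fin d)) (r : ℝ), 0 < r →
      0 < μ (Metric.ball c r) ∧ μ (Metric.ball c r) < ⊤)
    (y₀ : EuclideanSpace ℝ (Fin d))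
    (hC : Filter.limsup (fun r : ℝ => μ (Metric.ball y₀ (r + 1)) / μ (Metric.ball y₀ r))
      Filter.atTop < ⊤)
    (f : EuclideanSpace ℝ (Fin d) → ℝ) (hf : LocallyIntegrableBall μ f)
    (x₀ : EuclideanSpace ℝ (Fin d)) (hx₀ : centeredMaximal μ f x₀ < ⊤) :
    ∀ᵐ x ∂μ, centeredMaximal μ f x < ⊤ := by
  classical
  set ν : Measure (EuclideanSpace ℝ (Fin d)) :=
    μ.withDensity (fun y => ENNReal.ofReal |f y|) with hνdef
  have hνball : ∀ (c : EuclideanSpace ℝ (Fin d)) (r : ℝ),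
      ν (ball c r) = ∫⁻ y in ball c r, ENNReal.ofReal |f y| ∂μ :=
    fun c r => withDensity_apply _ measurableSet_ball
  haveI : IsLocallyFiniteMeasure μ :=
    ⟨fun x => ⟨ball x 1, ball_mem_nhds x one_pos, (hμ x 1 one_pos).2⟩⟩
  haveI : IsLocallyFiniteMeasure ν :=
    ⟨fun x => ⟨ball x 1, ball_mem_nhds x one_pos, by
      rw [hνball]; exact hf x 1 one_pos⟩⟩
  -- Rewrite the maximal function in terms of `ν`.
  have hmax : ∀ z, centeredMaximal μ f z
      = ⨆ (r : ℝ) (_ : 0 < r), ν (ball z r) / μ (ball z r) := by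
    intro z
    unfold centeredMaximal
    refine iSup_congr fun r => iSup_congr fun _ => ?_
    rw [hνball]
  -- measures of closed balls are positive and finite
  have hcb : ∀ (z : EuclideanSpace ℝ (Fin d)) (s : ℝ), 0 < s →
      μ (closedBall z s) ≠ 0 ∧ μ (closedBall z s) ≠ ⊤ := by
    intro z s hs
    constructor
    · exact ((hμ z s hs).1.trans_le (measure_mono ball_subset_closedBall)).ne'
    · exact (lt_of_le_of_lt (measure_mono (closedBall_subset_ball (lt_add_one s)))
        (hμ z (s + 1) (by linarith)).2).ne
  -- Step A: control of ν on balls around x₀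
  have hA : ∀ r : ℝ, 0 < r →
      ν (ball x₀ r) ≤ centeredMaximal μ f x₀ * μ (ball x₀ r) := by
    intro r hr
    have h1 : ν (ball x₀ r) / μ (ball x₀ r) ≤ centeredMaximal μ f x₀ := by
      rw [hmax x₀]
      exact le_iSup₂ (f := fun (r : ℝ) (_ : 0 < r) => ν (ball x₀ r) / μ (ball x₀ r)) r hr
    exact (ENNReal.div_le_iff (hμ x₀ r hr).1.ne' (hμ x₀ r hr).2.ne).1 h1
  -- Step B: doubling-type estimate at infinity
  set C : ℝ≥0∞ := Filter.limsup
      (fun r : ℝ => μ (Metric.ball y₀ (r + 1)) / μ (Metric.ball y₀ r)) Filter.atTop + 1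
    with hCdef
  have hClt : C < ⊤ := by
    rw [hCdef]
    exact ENNReal.add_lt_top.2 ⟨hC, ENNReal.one_lt_top⟩
  have hev : ∀ᶠ r in atTop,
      μ (ball y₀ (r + 1)) / μ (ball y₀ r) < C :=
    eventually_lt_of_limsup_lt (ENNReal.lt_add_right hC.ne one_ne_zero)
  obtain ⟨R₀', hR₀'⟩ := eventually_atTop.1 hev
  set R₀ : ℝ := max R₀' 1 with hR₀def
  have hR₀pos : (0 : ℝ) < R₀ := lt_of_lt_of_le one_pos (le_max_right _ _)
  have hB1 : ∀ r : ℝ, R₀ ≤ r → μ (ball y₀ (r + 1)) ≤ C * μ (ball y₀ r) := by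
    intro r hr
    have hrpos : 0 < r := lt_of_lt_of_le hR₀pos hr
    have h := (hR₀' r (le_trans (le_max_left _ _) hr)).le
    exact (ENNReal.div_le_iff (hμ y₀ r hrpos).1.ne' (hμ y₀ r hrpos).2.ne).1 h
  have hBn : ∀ (n : ℕ) (r : ℝ), R₀ ≤ r →
      μ (ball y₀ (r + n)) ≤ C ^ n * μ (ball y₀ r) := by
    intro n
    induction n with
    | zero => intro r hr; simp
    | succ n ih =>
      intro r hr
      have h1 : μ (ball y₀ (r + (n + 1 : ℕ))) ≤ C * μ (ball y₀ (r + n)) := by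
        have h := hB1 (r + n) (le_trans hr (le_add_of_nonneg_right n.cast_nonneg))
        have : (r + ((n : ℝ) + 1)) = (r + n) + 1 := by ring
        push_cast
        rw [this]
        exact h
      calc μ (ball y₀ (r + (n + 1 : ℕ))) ≤ C * μ (ball y₀ (r + n)) := h1
        _ ≤ C * (C ^ n * μ (ball y₀ r)) := mul_le_mul_right (ih r hr) C
        _ = C ^ (n + 1) * μ (ball y₀ r) := by ring
  -- a.e. differentiation
  filter_upwards [Besicovitch.ae_tendsto_rnDeriv ν μ, Measure.rnDeriv_lt_top ν μ]
    with x hx hlt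
  set l : ℝ≥0∞ := ν.rnDeriv μ x with hldef
  have hev2 : ∀ᶠ r in 𝓝[>] (0 : ℝ),
      ν (closedBall x r) / μ (closedBall x r) < l + 1 :=
    hx.eventually_lt_const (ENNReal.lt_add_right hlt.ne one_ne_zero)
  obtain ⟨δ, hδpos, hδ⟩ : ∃ δ > (0 : ℝ), ∀ r : ℝ, 0 < r → r ≤ δ →
      ν (closedBall x r) / μ (closedBall x r) < l + 1 := by
    rcases mem_nhdsGT_iff_exists_Ioc_subset.1 hev2 with ⟨u, hu, hsub⟩
    exact ⟨u, hu, fun r h1 h2 => hsub ⟨h1, h2⟩⟩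
  -- small-radius estimate
  have hsmall : ∀ r : ℝ, 0 < r → r ≤ δ → ν (ball x r) ≤ (l + 1) * μ (ball x r) := by
    intro r hr hrδ
    have hball : ball x r = ⋃ n : ℕ, closedBall x (r - r / (n + 2)) := by
      ext y
      simp only [mem_ball, mem_iUnion, mem_closedBall]
      constructor
      · intro h
        have h1 : 0 < r - dist y x := sub_pos.2 h
        obtain ⟨n, hn⟩ := exists_nat_gt (r / (r - dist y x))
        have h3 : r < n * (r - dist y x) := (div_lt_iff₀ h1).1 hn
        have h2 : r / ((n : ℝ) + 2) < r - dist y x := by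
          rw [div_lt_iff₀ (by positivity)]
          nlinarith
        exact ⟨n, by linarith⟩
      · rintro ⟨n, hn⟩
        have h0 : 0 < r / ((n : ℝ) + 2) := by positivity
        linarith
    have hmono : Monotone fun n : ℕ => closedBall x (r - r / (n + 2)) := by
      intro m n hmn
      apply closedBall_subset_closedBall
      have h1 : r / ((n : ℝ) + 2) ≤ r / ((m : ℝ) + 2) := by
        apply div_le_div_of_nonneg_left hr.le (by positivity)
        exact_mod_cast by exact_mod_cast add_le_add_left (Nat.cast_le.2 hmn) 2
      linarith
    have hνU : ν (ball x r) = ⨆ n : ℕ, ν (closedBall x (r - r / (n + 2))) := by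
      rw [hball]
      exact hmono.directed_le.measure_iUnion
    rw [hνU]
    apply iSup_le
    intro n
    have hq : 0 < r / ((n : ℝ) + 2) := by positivity
    have hq2 : r / ((n : ℝ) + 2) < r := by
      apply div_lt_self hr
      have : (0 : ℝ) ≤ (n : ℝ) := n.cast_nonneg
      linarith
    have hrn_pos : 0 < r - r / ((n : ℝ) + 2) := by linarith
    have hlt2 := (hδ (r - r / (n + 2)) hrn_pos (by linarith)).le
    have hb := (ENNReal.div_le_iff (hcb x _ hrn_pos).1 (hcb x _ hrn_pos).2).1 hlt2
    calc ν (closedBall x (r - r / (n + 2)))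
        ≤ (l + 1) * μ (closedBall x (r - r / (n + 2))) := hb
      _ ≤ (l + 1) * μ (ball x r) := by
          apply mul_le_mul_right
          exact measure_mono (closedBall_subset_ball (by linarith))
  -- constants for the large-radius estimate
  set A : ℝ := dist x x₀ with hAdef
  set B : ℝ := dist x y₀ with hBdef
  set D : ℝ := dist x₀ y₀ with hDdef
  have hA0 : 0 ≤ A := dist_nonneg
  have hB0 : 0 ≤ B := dist_nonneg
  have hD0 : 0 ≤ D := dist_nonneg
  set n : ℕ := ⌈A + B + D⌉₊ with hndef
  have hcast : A + B + D ≤ (n : ℝ) := Nat.le_ceil _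
  set R : ℝ := R₀ + B + δ + 1 with hRdef
  have hRpos : 0 < R := by
    rw [hRdef]; linarith
  have hνR : ν (ball x R) ≠ ⊤ := by
    rw [hνball]; exact (hf x R hRpos).ne
  -- the global bound
  set K : ℝ≥0∞ := max (max (l + 1) (ν (ball x R) / μ (ball x δ)))
      (centeredMaximal μ f x₀ * C ^ n) with hKdef
  have hK : K < ⊤ := by
    rw [hKdef]
    apply max_lt
    apply max_lt
    · exact ENNReal.add_lt_top.2 ⟨hlt, ENNReal.one_lt_top⟩
    · exact ENNReal.div_lt_top hνR (hμ x δ hδpos).1.ne'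
    · exact ENNReal.mul_lt_top hx₀ (ENNReal.pow_lt_top hClt)
  refine lt_of_le_of_lt ?_ hK
  rw [hmax x]
  apply iSup₂_le
  intro r hr
  rcases le_or_gt r δ with hcase | hcase
  · -- small radii
    refine le_trans ?_ (le_max_of_le_left (le_max_left _ _))
    exact ENNReal.div_le_of_le_mul (hsmall r hr hcase)
  · rcases le_or_gt r R with hcase2 | hcase2
    · -- intermediate radii
      refine le_trans ?_ (le_max_of_le_left (le_max_right _ _))
      exact ENNReal.div_le_div (measure_mono (ball_subset_ball hcase2))
        (measure_mono (ball_subset_ball hcase.le))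
    · -- large radii
      refine le_trans ?_ (le_max_right _ _)
      have h1 : ν (ball x r) ≤ ν (ball x₀ (r + A)) := by
        apply measure_mono
        exact ball_subset_ball' (by rw [hAdef])
      have h2 : ν (ball x₀ (r + A)) ≤ centeredMaximal μ f x₀ * μ (ball x₀ (r + A)) :=
        hA (r + A) (by linarith)
      have h3 : μ (ball x₀ (r + A)) ≤ μ (ball y₀ (r + A + D)) := by
        apply measure_mono
        exact ball_subset_ball' (by rw [hDdef])
      have h4 : μ (ball y₀ (r + A + D)) ≤ μ (ball y₀ ((r - B) + n)) := by
        apply measure_mono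
        apply ball_subset_ball
        linarith
      have h5 : μ (ball y₀ ((r - B) + n)) ≤ C ^ n * μ (ball y₀ (r - B)) := by
        apply hBn
        rw [hRdef] at hcase2
        linarith
      have h6 : μ (ball y₀ (r - B)) ≤ μ (ball x r) := by
        apply measure_mono
        apply ball_subset_ball'
        rw [dist_comm, ← hBdef]
        linarith
      have hfinal : ν (ball x r) ≤ (centeredMaximal μ f x₀ * C ^ n) * μ (ball x r) := by
        calc ν (ball x r) ≤ centeredMaximal μ f x₀ * μ (ball x₀ (r + A)) := h1.trans h2
          _ ≤ centeredMaximal μ f x₀ * (C ^ n * μ (ball y₀ (r - B))) :=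
              mul_le_mul_right ((h3.trans h4).trans h5) _
          _ = (centeredMaximal μ f x₀ * C ^ n) * μ (ball y₀ (r - B)) := (mul_assoc _ _ _).symm
          _ ≤ (centeredMaximal μ f x₀ * C ^ n) * μ (ball x r) := mul_le_mul_right h6 _
      exact ENNReal.div_le_of_le_mul hfinal
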